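/- For any monoidal unit map f : A ⊗ B → C in a closed symmetric monoidal category with initial object ∅, the {c, c†}-colored collection P with P(c) = A, P(c†) = B, P() = C, and ∅ otherwise, equipped with ∘_0^0 : P(c) ⊗ P(c†) → P() given by f, ∘_0^0 : P(c†) ⊗ P(c) → P() given by f precomposed with the symmetry, and all other compositions the unique maps from ∅, is a non-unital cyclic operad (i.e., satisfies axioms C.1–C.3). -/

import Mathlib

open CategoryTheory MonoidalCategory

universe w v u

/-- The profile `c̄ σ = c_{σ(0)}, …, c_{σ(n)}` obtained by permuting a profile (a list). -/
def permuteList {C : Type u} (c : List C) {n : ℕ} (h : c.length = n)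
    (σ : Equiv.Perm (Fin n)) : List C :=
  List.ofFn fun k => c.get (Fin.cast h.symm (σ k))

/-- The composite profile `c̄ ∘_i^j d̄ = c_0,…,c_{i-1}, d_{j+1},…,d_m, d_0,…,d_{j-1},
c_{i+1},…,c_n`. -/
def profComp {C : Type u} (c d : List C) (i j : ℕ) : List C :=
  c.take i ++ (d.drop (j + 1) ++ (d.take j ++ c.drop (i + 1)))

/-- The helper function `α_{i,m}` : identity on `[0,i-1]`, `x ↦ x - 1 + m` on `[i+1,n]`. -/
def alphaN (i m x : ℕ) : ℕ := if x < i then x else x + m - 1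

/-- The helper function `β_{j,i}` : `x ↦ x + m - j + i` on `[0,j-1]`, `x ↦ x - j - 1 + i`
on `[j+1,m]`. -/
def betaN (m j i x : ℕ) : ℕ := if x < j then x + m + i - j else x + i - j - 1

/-- The underlying data of a (colored) cyclic operad in a monoidal category `V`, *without*
identity elements: an involutive color set, objects `P(c_0,…,c_n)` of `V` indexed by
profiles, a right action of `Σ_n^+ = Aut([0,n])`, and composition operations `∘_i^j`
defined when `c_i = d_j^†`. -/
structure VCycDataNU (C : Type u) (V : Type v) [Category.{w} V] [MonoidalCategory V] where
  dag : C → C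
  dag_invol : Function.Involutive dag
  P : List C → V
  act : ∀ {c : List C} {n : ℕ} (h : c.length = n) (σ : Equiv.Perm (Fin n)),
    P c ⟶ P (permuteList c h σ)
  comp : ∀ {c d : List C} (i j : ℕ) (hi : i < c.length) (hj : j < d.length),
    c.get ⟨i, hi⟩ = dag (d.get ⟨j, hj⟩) → (P c ⊗ P d ⟶ P (profComp c d i j))

/-- The underlying data of a (colored) cyclic operad in `V`: the non-unital data together
with identity elements `id_c : 𝟙_V → P(c^†, c)`. -/
structure VCycData (C : Type u) (V : Type v) [Category.{w} V] [MonoidalCategory V] extends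
    VCycDataNU C V where
  ident : ∀ c : C, (𝟙_ V ⟶ P [dag c, c])

variable {C : Type u} {V : Type v} [Category.{w} V] [MonoidalCategory V] [SymmetricCategory V]

/-- Axioms (C.1), (C.2), (C.3) of a cyclic operad (together with functoriality of the
symmetric group actions): a *non-unital Markl cyclic operad*. -/
structure IsVMarkl (D : VCycDataNU C V) : Prop where
  act_one : ∀ {c : List C} {n : ℕ} (h : c.length = n) (hl : permuteList c h 1 = c),
    D.act h 1 = eqToHom (congrArg D.P hl.symm)
  act_mul : ∀ {c : List C} {n : ℕ} (h : c.length = n) (σ σ' : Equiv.Perm (Fin n))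
    (h2 : (permuteList c h σ).length = n)
    (hl : permuteList (permuteList c h σ) h2 σ' = permuteList c h (σ * σ')),
    D.act h σ ≫ D.act h2 σ' = D.act h (σ * σ') ≫ eqToHom (congrArg D.P hl.symm)
  /- (C.1): `(τ^{m-j+i})^* (x ∘_i^j y) = y ∘_j^i x`. -/
  swap : ∀ {c d : List C} (i j : ℕ) (hi : i < c.length) (hj : j < d.length)
    (hcd : c.get ⟨i, hi⟩ = D.dag (d.get ⟨j, hj⟩))
    (hdc : d.get ⟨j, hj⟩ = D.dag (c.get ⟨i, hi⟩))
    (hlen : (profComp c d i j).length = c.length + d.length - 2)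
    (hl : permuteList (profComp c d i j) hlen
        ((finRotate (c.length + d.length - 2)) ^ (d.length - 1 - j + i)) = profComp d c j i),
    D.comp i j hi hj hcd ≫
        D.act hlen ((finRotate (c.length + d.length - 2)) ^ (d.length - 1 - j + i)) ≫
        eqToHom (congrArg D.P hl)
      = (β_ (D.P c) (D.P d)).hom ≫ D.comp j i hj hi hdc
  /- (C.2): `(x ∘_i^j y) ∘_{β_{j,i}(k)}^{l} z = x ∘_i^{α_{k,p}(j)} (y ∘_k^l z)` for `k ≠ j`,
  whenever the indicated compositions are defined. -/
  assoc : ∀ {c d e : List C} (i j k l : ℕ) (hi : i < c.length) (hj : j < d.length)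
    (hk : k < d.length) (hl : l < e.length) (_ : k ≠ j)
    (h1 : c.get ⟨i, hi⟩ = D.dag (d.get ⟨j, hj⟩))
    (h2 : d.get ⟨k, hk⟩ = D.dag (e.get ⟨l, hl⟩))
    (hb : betaN (d.length - 1) j i k < (profComp c d i j).length)
    (hcol1 : (profComp c d i j).get ⟨betaN (d.length - 1) j i k, hb⟩ = D.dag (e.get ⟨l, hl⟩))
    (ha : alphaN k (e.length - 1) j < (profComp d e k l).length)
    (hcol2 : c.get ⟨i, hi⟩ = D.dag ((profComp d e k l).get ⟨alphaN k (e.length - 1) j, ha⟩))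
    (hlist : profComp c (profComp d e k l) i (alphaN k (e.length - 1) j)
      = profComp (profComp c d i j) e (betaN (d.length - 1) j i k) l),
    (D.comp i j hi hj h1 ▷ D.P e) ≫ D.comp (betaN (d.length - 1) j i k) l hb hl hcol1
      = (α_ (D.P c) (D.P d) (D.P e)).hom ≫ (D.P c ◁ D.comp k l hk hl h2) ≫
          D.comp i (alphaN k (e.length - 1) j) hi ha hcol2 ≫ eqToHom (congrArg D.P hlist)
  /- (C.3): `(σ₁^* x) ∘_i^j (σ₂^* y) = σ^* (x ∘_{σ₁(i)}^{σ₂(j)} y)` where `σ` is determined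
  by `σ ∘ (α_{i,m} ⊔ β_{j,i}) = (α_{σ₁(i),m} ⊔ β_{σ₂(j),σ₁(i)}) ∘ (σ₁ ⊔ σ₂)`. -/
  equiv : ∀ {c d : List C} {nc nd : ℕ} (h1 : c.length = nc) (h2 : d.length = nd)
    (σ₁ : Equiv.Perm (Fin nc)) (σ₂ : Equiv.Perm (Fin nd)) (i : Fin nc) (j : Fin nd)
    (σ : Equiv.Perm (Fin (nc + nd - 2)))
    (_ : ∀ (x : Fin nc), x ≠ i → ∀ (hax : alphaN i.val (nd - 1) x.val < nc + nd - 2),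
      (σ ⟨alphaN i.val (nd - 1) x.val, hax⟩).val = alphaN (σ₁ i).val (nd - 1) (σ₁ x).val)
    (_ : ∀ (x : Fin nd), x ≠ j → ∀ (hbx : betaN (nd - 1) j.val i.val x.val < nc + nd - 2),
      (σ ⟨betaN (nd - 1) j.val i.val x.val, hbx⟩).val
        = betaN (nd - 1) (σ₂ j).val (σ₁ i).val (σ₂ x).val)
    (hip : i.val < (permuteList c h1 σ₁).length) (hjp : j.val < (permuteList d h2 σ₂).length)
    (hcolp : (permuteList c h1 σ₁).get ⟨i.val, hip⟩
      = D.dag ((permuteList d h2 σ₂).get ⟨j.val, hjp⟩))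
    (hi0 : (σ₁ i).val < c.length) (hj0 : (σ₂ j).val < d.length)
    (hcol0 : c.get ⟨(σ₁ i).val, hi0⟩ = D.dag (d.get ⟨(σ₂ j).val, hj0⟩))
    (hlen : (profComp c d (σ₁ i).val (σ₂ j).val).length = nc + nd - 2)
    (hlist : permuteList (profComp c d (σ₁ i).val (σ₂ j).val) hlen σ
      = profComp (permuteList c h1 σ₁) (permuteList d h2 σ₂) i.val j.val),
    (D.act h1 σ₁ ⊗ₘ D.act h2 σ₂) ≫ D.comp i.val j.val hip hjp hcolp
      = D.comp (σ₁ i).val (σ₂ j).val hi0 hj0 hcol0 ≫ D.act hlen σ ≫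
          eqToHom (congrArg D.P hlist)

/-- The axioms (C.1)–(C.4) of a (colored) cyclic operad in `V`. -/
structure IsVCyc (D : VCycData C V) : Prop where
  markl : IsVMarkl D.toVCycDataNU
  /- (C.4), first half: `x ∘_i^1 id_c = x`. -/
  unit : ∀ {c : List C} (i : ℕ) (hi : i < c.length) (cc : C)
    (h2 : 1 < ([D.dag cc, cc] : List C).length)
    (hcol : c.get ⟨i, hi⟩ = D.dag (([D.dag cc, cc] : List C).get ⟨1, h2⟩))
    (hlist : c = profComp c [D.dag cc, cc] i 1),
    (ρ_ (D.P c)).inv ≫ (D.P c ◁ D.ident cc) ≫ D.comp i 1 hi h2 hcol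
      = eqToHom (congrArg D.P hlist)
  /- (C.4), second half: `τ^* id_c = id_{c^†}`. -/
  tau_ident : ∀ (cc : C) (h : ([D.dag cc, cc] : List C).length = 2)
    (hl : permuteList [D.dag cc, cc] h (finRotate 2) = [D.dag (D.dag cc), D.dag cc]),
    D.ident cc ≫ D.act h (finRotate 2) = D.ident (D.dag cc) ≫ eqToHom (congrArg D.P hl.symm)

section Pairings

open Limits

variable {V : Type v} [Category.{w} V] [MonoidalCategory V] [SymmetricCategory V]
  [MonoidalClosed V] [HasInitial V]

/-- The underlying collection of the pairing cyclic operad: colors `{c, c†}` are encoded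
by `Bool` (with `c = false`, `c† = true` and free involution `!`), and
`P(c) = A`, `P(c†) = B`, `P() = C`, with all other operation objects initial. -/
noncomputable def pairingP (A B Cc : V) : List Bool → V := fun l =>
  match l with
  | [] => Cc
  | [b] => cond b B A
  | _ => ⊥_ V

private lemma permuteList_small {α : Type u} (l : List α) {n : ℕ} (h : l.length = n)
    (σ : Equiv.Perm (Fin n)) (hn : n ≤ 1) : permuteList l h σ = l := by
  have hz : ∀ z : Fin n, z.val = 0 := fun z => Nat.lt_one_iff.mp (lt_of_lt_of_le z.isLt hn)
  have hσ : σ = 1 := by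
    ext k
    rw [show σ k = k from Fin.ext ((hz (σ k)).trans (hz k).symm)]
    rfl
  subst hσ
  subst h
  rcases l with _ | ⟨a, _ | ⟨b, t⟩⟩
  · rfl
  · simp [permuteList]
  · simp at hn

/-- The pairing data: `∘_0^0 : P(c) ⊗ P(c†) → P()` is `f : A ⊗ B → C`,
`∘_0^0 : P(c†) ⊗ P(c) → P()` is `f` precomposed with the symmetry, and all the other
compositions are the unique maps out of (tensor factors that are) initial objects. -/
noncomputable def pairingData (A B Cc : V) (f : A ⊗ B ⟶ Cc) : VCycDataNU Bool V where
  dag := Bool.not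
  dag_invol := by intro b; cases b <;> rfl
  P := pairingP A B Cc
  act := fun {c n} h σ => by
    rcases c with _ | ⟨a, _ | ⟨b, t⟩⟩
    · exact eqToHom (congrArg (pairingP A B Cc)
        (permuteList_small [] h σ (by simp at h; omega)).symm)
    · exact eqToHom (congrArg (pairingP A B Cc)
        (permuteList_small [a] h σ (by simp at h; omega)).symm)
    · -- profiles of length ≥ 2: the operation object is initial
      have h2 : 2 ≤ n := by simp at h; omega
      rcases hpl : permuteList (a :: b :: t) h σ with _ | ⟨x, _ | ⟨y, s⟩⟩
      · exfalso
        have := congrArg List.length hpl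
        simp [permuteList] at this
        omega
      · exfalso
        have := congrArg List.length hpl
        simp [permuteList] at this
        omega
      · exact initial.to _
  comp := fun {c d} i j hi hj hcol => by
    rcases c with _ | ⟨a, _ | ⟨b, t⟩⟩
    · simp at hi
    · rcases d with _ | ⟨a', _ | ⟨b', t'⟩⟩
      · simp at hj
      · -- the main case: two single-color profiles
        simp only [List.length_cons, List.length_nil] at hi hj
        interval_cases i <;> interval_cases j
        simp only [List.get] at hcol
        rcases a with _ | _ <;> rcases a' with _ | _
        · exact absurd hcol (by simp)
        · -- `P(c) ⊗ P(c†) → P()` is `f`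
          exact f
        · -- `P(c†) ⊗ P(c) → P()` is `f` precomposed with the symmetry
          exact (β_ B A).hom ≫ f
        · exact absurd hcol (by simp)
      · -- second factor initial
        show pairingP A B Cc [a] ⊗ (⊥_ V) ⟶
          pairingP A B Cc (profComp [a] (a' :: b' :: t') i j)
        exact MonoidalClosed.uncurry (initial.to _)
    · -- first factor initial: compose with the symmetry first
      show (⊥_ V) ⊗ pairingP A B Cc d ⟶ pairingP A B Cc (profComp (a :: b :: t) d i j)
      exact (β_ _ _).hom ≫ MonoidalClosed.uncurry (initial.to _)


open Limits in
private noncomputable def isInitialTensorRight (X : V) {I : V} (hI : IsInitial I) :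
    IsInitial (X ⊗ I) :=
  letI := (ihom.adjunction X).leftAdjoint_preservesColimits
  hI.isInitialObj (tensorLeft X) I

open Limits in
private noncomputable def isInitialTensorLeft {I : V} (hI : IsInitial I) (X : V) :
    IsInitial (I ⊗ X) :=
  (isInitialTensorRight X hI).ofIso (β_ X I)

private lemma act_small (A B Cc : V) (f : A ⊗ B ⟶ Cc) {c : List Bool} {n : ℕ}
    (h : c.length = n) (σ : Equiv.Perm (Fin n)) (hn : n ≤ 1) :
    (pairingData A B Cc f).act h σ
      = eqToHom (congrArg (pairingData A B Cc f).P (permuteList_small c h σ hn).symm) := by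
  rcases c with _ | ⟨a, _ | ⟨b, t⟩⟩
  · rfl
  · rfl
  · exfalso; simp at h; omega

private lemma comp_ft (A B Cc : V) (f : A ⊗ B ⟶ Cc) (h1 h2 hcol) :
    (pairingData A B Cc f).comp (c := [false]) (d := [true]) 0 0 h1 h2 hcol = f := rfl

private lemma comp_tf (A B Cc : V) (f : A ⊗ B ⟶ Cc) (h1 h2 hcol) :
    (pairingData A B Cc f).comp (c := [true]) (d := [false]) 0 0 h1 h2 hcol
      = (β_ B A).hom ≫ f := rfl


private lemma tensor_eqToHom {X X' Y Y' : V} (p : X = X') (q : Y = Y') :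
    (eqToHom p ⊗ₘ eqToHom q) = eqToHom (by rw [p, q]) := by
  subst p; subst q; simp [tensorHom_id]

private lemma comp_congr (D : VCycDataNU Bool V) {c c' d d' : List Bool}
    (hc : c' = c) (hd : d' = d) {i i' j j' : ℕ} (hii : i' = i) (hjj : j' = j)
    (hi' : i' < c'.length) (hj' : j' < d'.length)
    (hcol' : c'.get ⟨i', hi'⟩ = D.dag (d'.get ⟨j', hj'⟩))
    (hi : i < c.length) (hj : j < d.length)
    (hcol : c.get ⟨i, hi⟩ = D.dag (d.get ⟨j, hj⟩)) :
    D.comp i' j' hi' hj' hcol' = eqToHom (by rw [hc, hd]) ≫ D.comp i j hi hj hcol ≫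
      eqToHom (by rw [hc, hd, hii, hjj]) := by
  subst hc; subst hd; subst hii; subst hjj
  simp

/-- for any map `f : A ⊗ B → C` in a closed symmetric monoidal category
with initial object `∅`, the `{c, c†}`-colored collection with `P(c) = A`, `P(c†) = B`,
`P() = C` and `∅` otherwise, with `∘_0^0 : P(c) ⊗ P(c†) → P()` given by `f`,
`∘_0^0 : P(c†) ⊗ P(c) → P()` given by `f` precomposed with the symmetry, and all other
compositions the unique maps from `∅`, is a non-unital (Markl) cyclic operad, i.e. it
satisfies axioms (C.1)–(C.3). -/
theorem pairingData_isMarkl (A B Cc : V) (f : A ⊗ B ⟶ Cc) :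
    IsVMarkl (pairingData A B Cc f) := by
  constructor
  · -- act_one
    intro c n h hl
    rcases c with _ | ⟨a, _ | ⟨b, t⟩⟩
    · rw [act_small A B Cc f h 1 (by simp at h; omega)]
    · rw [act_small A B Cc f h 1 (by simp at h; omega)]
    · exact Limits.initialIsInitial.hom_ext _ _
  · -- act_mul
    intro c n h σ σ' h2 hl
    rcases c with _ | ⟨a, _ | ⟨b, t⟩⟩
    · have hn : n ≤ 1 := by simp at h; omega
      rw [act_small A B Cc f h σ hn, act_small A B Cc f h2 σ' hn,
        act_small A B Cc f h (σ * σ') hn]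
      simp
    · have hn : n ≤ 1 := by simp at h; omega
      rw [act_small A B Cc f h σ hn, act_small A B Cc f h2 σ' hn,
        act_small A B Cc f h (σ * σ') hn]
      simp
    · exact Limits.initialIsInitial.hom_ext _ _
  · -- swap
    intro c d i j hi hj hcd hdc hlen hl
    rcases c with _ | ⟨a, _ | ⟨b, t⟩⟩
    · simp at hi
    · rcases d with _ | ⟨a', _ | ⟨b', t'⟩⟩
      · simp at hj
      · -- main case
        simp only [List.length_cons, List.length_nil] at hi hj
        have hi0 : i = 0 := by omega
        have hj0 : j = 0 := by omega
        subst hi0; subst hj0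
        have hn : [a].length + [a'].length - 2 ≤ 1 := by simp
        rw [act_small A B Cc f hlen _ hn]
        simp only [List.get] at hcd
        rcases a with _ | _ <;> rcases a' with _ | _
        · simp [pairingData] at hcd
        · simp only [eqToHom_trans]
          rw [comp_ft A B Cc f, comp_tf A B Cc f]
          show f ≫ 𝟙 Cc = (β_ A B).hom ≫ (β_ B A).hom ≫ f
          rw [Category.comp_id, SymmetricCategory.symmetry_assoc]
        · simp only [eqToHom_trans]
          rw [comp_tf A B Cc f, comp_ft A B Cc f]
          show ((β_ B A).hom ≫ f) ≫ 𝟙 Cc = (β_ B A).hom ≫ f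
          rw [Category.comp_id]
        · simp [pairingData] at hcd
      · exact (isInitialTensorRight _ Limits.initialIsInitial).hom_ext _ _
    · exact (isInitialTensorLeft Limits.initialIsInitial _).hom_ext _ _
  · -- assoc
    intro c d e i j k l hi hj hk hl hkj h1 h2 hb hcol1 ha hcol2 hlist
    rcases d with _ | ⟨a', _ | ⟨b', t'⟩⟩
    · simp at hj
    · simp only [List.length_cons, List.length_nil] at hj hk
      omega
    · exact (isInitialTensorLeft
        (isInitialTensorRight _ Limits.initialIsInitial) _).hom_ext _ _
  · -- equiv
    intro c d nc nd h1 h2 σ₁ σ₂ i j σ hax hbx hip hjp hcolp hi0 hj0 hcol0 hlen hlist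
    rcases c with _ | ⟨a, _ | ⟨b, t⟩⟩
    · exfalso; have := i.isLt; simp at h1; omega
    · rcases d with _ | ⟨a', _ | ⟨b', t'⟩⟩
      · exfalso; have := j.isLt; simp at h2; omega
      · -- main case
        have hnc : nc = 1 := by simpa using h1.symm
        have hnd : nd = 1 := by simpa using h2.symm
        have hn1 : nc ≤ 1 := by omega
        have hn2 : nd ≤ 1 := by omega
        have hn0 : nc + nd - 2 ≤ 1 := by omega
        rw [act_small A B Cc f h1 σ₁ hn1, act_small A B Cc f h2 σ₂ hn2,
          act_small A B Cc f hlen σ hn0, tensor_eqToHom,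
          comp_congr (pairingData A B Cc f)
            (permuteList_small [a] h1 σ₁ hn1) (permuteList_small [a'] h2 σ₂ hn2)
            (i' := i.val) (i := (σ₁ i).val) (j' := j.val) (j := (σ₂ j).val)
            (by omega) (by omega) hip hjp hcolp hi0 hj0 hcol0]
        simp
      · exact (isInitialTensorRight _ Limits.initialIsInitial).hom_ext _ _
    · exact (isInitialTensorLeft Limits.initialIsInitial _).hom_ext _ _

end Pairings
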